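/- Let a > b > 0, let Z₀ be a positive integer, let M > 1 be real, let k be a nonnegative integer, and let t ≥ max(log 2, log(aM/b)) / (a − b). Let Z be a random variable taking values in the nonnegative integers whose probability generating function at the point x = 1 − 1/M satisfies E[x^Z] = ( (b(x−1) − (ax−b)e^{−(a−b)t}) / (a(x−1) − (ax−b)e^{−(a−b)t}) )^{Z₀}. Then P(Z ≤ k) ≤ (1 − 1/M)^{−k} · (4b/a)^{Z₀}. -/

import Mathlib

set_option maxHeartbeats 1000000 in
/-- Let a > b > 0, Z₀ a positive integer, M > 1 real, k a nonnegative integer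
and t ≥ max(log 2, log(aM/b))/(a−b). If Z is an ℕ-valued random variable (with mass
function f) whose probability generating function at x = 1 − 1/M equals the explicit
birth–death expression, then P(Z ≤ k) ≤ (1 − 1/M)^{−k} · (4b/a)^{Z₀}. -/
theorem birthDeath_lower_tail (a b : ℝ) (hb : 0 < b) (hab : b < a) (Z₀ : ℕ) (hZ₀ : 0 < Z₀)
    (M : ℝ) (hM : 1 < M) (k : ℕ) (t : ℝ)
    (ht : max (Real.log 2) (Real.log (a * M / b)) / (a - b) ≤ t)
    (f : ℕ → ℝ) (hf : ∀ n, 0 ≤ f n) (hsum : ∑' n : ℕ, f n = 1)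
    (hpgf : ∑' n : ℕ, f n * (1 - 1 / M) ^ n =
      ((b * ((1 - 1 / M) - 1) - (a * (1 - 1 / M) - b) * Real.exp (-(a - b) * t)) /
        (a * ((1 - 1 / M) - 1) - (a * (1 - 1 / M) - b) * Real.exp (-(a - b) * t))) ^ Z₀) :
    (∑' n : ℕ, if n ≤ k then f n else 0) ≤ ((1 - 1 / M) ^ k)⁻¹ * (4 * b / a) ^ Z₀ := by
  have ha : 0 < a := hb.trans hab
  have hM0 : (0:ℝ) < M := lt_trans one_pos hM
  set u : ℝ := 1 / M with hudef
  have hu0 : 0 < u := by positivity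
  have hu1 : u < 1 := by rw [hudef, div_lt_one hM0]; exact hM
  set x : ℝ := 1 - u with hxdef
  have hx0 : 0 < x := by rw [hxdef]; linarith
  have hx1 : x < 1 := by rw [hxdef]; linarith
  set E : ℝ := Real.exp (-(a - b) * t) with hEdef
  have hE0 : 0 < E := Real.exp_pos _
  have hab' : 0 < a - b := by linarith
  have htt : max (Real.log 2) (Real.log (a * M / b)) ≤ (a - b) * t := by
    rw [div_le_iff₀ hab'] at ht; linarith [ht]
  have hE2 : E ≤ 1 / 2 := by
    have h1 : Real.log 2 ≤ (a - b) * t := le_trans (le_max_left _ _) htt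
    have h2 : E ≤ Real.exp (-Real.log 2) := by
      rw [hEdef]; apply Real.exp_le_exp.2; linarith
    rw [Real.exp_neg, Real.exp_log (by norm_num : (0:ℝ) < 2)] at h2
    norm_num at h2 ⊢; linarith
  have hE3 : a * M * E ≤ b := by
    have h1 : Real.log (a * M / b) ≤ (a - b) * t := le_trans (le_max_right _ _) htt
    have h2 : E ≤ Real.exp (-Real.log (a * M / b)) := by
      rw [hEdef]; apply Real.exp_le_exp.2; linarith
    rw [Real.exp_neg, Real.exp_log (by positivity)] at h2
    have haM : 0 < a * M := by positivity
    calc a * M * E ≤ a * M * (a * M / b)⁻¹ :=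
          mul_le_mul_of_nonneg_left h2 (le_of_lt haM)
      _ = b := by field_simp
  have haE : a * E ≤ b * u := by
    have h1 : a * E = a * M * E * u := by
      rw [hudef]; field_simp
    have h2 : a * M * E * u ≤ b * u := mul_le_mul_of_nonneg_right hE3 hu0.le
    linarith
  set c : ℝ := a * x - b with hcdef
  have hcM : c = a - b - a * u := by rw [hcdef, hxdef]; ring
  have hc_lb : -(a * u) < c := by rw [hcM]; linarith
  have hc_ub : c < a := by rw [hcM]; nlinarith
  -- positivity of numerator and denominator (after sign flip)
  have hden : 0 < a * u + c * E := by
    rcases le_or_gt 0 c with hc | hc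
    · have h1 : 0 ≤ c * E := mul_nonneg hc hE0.le
      have : 0 < a * u := by positivity
      linarith
    · have h2 : -(a * u) * E ≤ c * E := mul_le_mul_of_nonneg_right hc_lb.le hE0.le
      have h3 : -(a * u) * E ≥ -(a * u) * (1/2) := by nlinarith
      nlinarith
  have hnum : 0 ≤ b * u + c * E := by
    rcases le_or_gt 0 c with hc | hc
    · have h1 : 0 ≤ c * E := mul_nonneg hc hE0.le
      nlinarith
    · have h2 : -(a * u) * E ≤ c * E := mul_le_mul_of_nonneg_right hc_lb.le hE0.le
      -- a*u*E ≤ u*(b*u) = b*u^2 < b*u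
      have h3 : a * u * E ≤ b * u * u := by
        calc a * u * E = a * E * u := by ring
          _ ≤ b * u * u := mul_le_mul_of_nonneg_right haE hu0.le
      nlinarith [mul_pos hb hu0]
  have key : a * (b * u + c * E) ≤ 4 * b * (a * u + c * E) := by
    rcases le_or_gt 0 c with hc | hc
    · -- a c E ≤ c b u ≤ a b u, so (a-4b) c E ≤ 3 a b u
      have h1 : c * (a * E) ≤ c * (b * u) := mul_le_mul_of_nonneg_left haE hc
      nlinarith [mul_nonneg (mul_nonneg hc hE0.le) hb.le]
    · -- (4b-a)(-c)E ≤ 4b (a u)(1/2) = 2abu ≤ 3abu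
      have h1 : (-c) * E ≤ (a * u) * (1/2) :=
        mul_le_mul (by linarith : -c ≤ a * u) hE2 hE0.le (by positivity)
      nlinarith [mul_nonneg (neg_nonneg.2 hc.le) hE0.le, mul_pos ha hu0, mul_pos hb (mul_pos ha hu0)]
  have hR : b * u + c * E ≤ (4 * b / a) * (a * u + c * E) := by
    rw [div_mul_eq_mul_div, le_div_iff₀ ha]
    nlinarith [key]
  -- the generating function value
  have hRatio : (b * (x - 1) - (a * x - b) * E) / (a * (x - 1) - (a * x - b) * E)
      = (b * u + c * E) / (a * u + c * E) := by
    have hnume : b * (x - 1) - (a * x - b) * E = -(b * u + c * E) := by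
      rw [hcdef, hxdef]; ring
    have hdene : a * (x - 1) - (a * x - b) * E = -(a * u + c * E) := by
      rw [hcdef, hxdef]; ring
    rw [hnume, hdene, neg_div_neg_eq]
  have hG0 : 0 ≤ (b * u + c * E) / (a * u + c * E) := div_nonneg hnum hden.le
  have hGle : (b * u + c * E) / (a * u + c * E) ≤ 4 * b / a := by
    rw [div_le_iff₀ hden]; exact hR
  -- summability
  have hfs : Summable f := by
    by_contra h
    rw [tsum_eq_zero_of_not_summable h] at hsum
    norm_num at hsum
  have hxn1 : ∀ n : ℕ, x ^ n ≤ 1 := fun n => pow_le_one₀ hx0.le hx1.le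
  have hfs2 : Summable (fun n => f n * x ^ n) := by
    apply Summable.of_nonneg_of_le (fun n => mul_nonneg (hf n) (pow_nonneg hx0.le n)) (fun n => ?_) hfs
    calc f n * x ^ n ≤ f n * 1 := mul_le_mul_of_nonneg_left (hxn1 n) (hf n)
      _ = f n := mul_one _
  have hfs3 : Summable (fun n : ℕ => if n ≤ k then f n else 0) := by
    apply Summable.of_nonneg_of_le (fun n => ?_) (fun n => ?_) hfs
    · split <;> simp [hf n]
    · split <;> simp [hf n]
  -- Markov
  have hmarkov : (∑' n : ℕ, if n ≤ k then f n else 0)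
      ≤ ∑' n : ℕ, (x ^ k)⁻¹ * (f n * x ^ n) := by
    apply Summable.tsum_le_tsum ?_ hfs3 (hfs2.mul_left _)
    intro n
    by_cases hn : n ≤ k
    · simp only [hn, if_true]
      have hxk : 0 < x ^ k := pow_pos hx0 k
      have hle : x ^ k ≤ x ^ n := pow_le_pow_of_le_one hx0.le hx1.le hn
      have hmul : f n * x ^ k ≤ f n * x ^ n := mul_le_mul_of_nonneg_left hle (hf n)
      rw [inv_mul_eq_div, le_div_iff₀ hxk]
      linarith
    · simp only [hn, if_false]
      exact mul_nonneg (by positivity) (mul_nonneg (hf n) (pow_nonneg hx0.le n))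
  have htsum : ∑' n : ℕ, (x ^ k)⁻¹ * (f n * x ^ n) = (x ^ k)⁻¹ * ∑' n, f n * x ^ n :=
    tsum_mul_left
  have hxkinv : 0 < (x ^ k)⁻¹ := by positivity
  calc (∑' n : ℕ, if n ≤ k then f n else 0)
      ≤ (x ^ k)⁻¹ * ∑' n, f n * x ^ n := by rw [← htsum]; exact hmarkov
    _ = (x ^ k)⁻¹ * ((b * u + c * E) / (a * u + c * E)) ^ Z₀ := by
        rw [hpgf, ← hRatio]
    _ ≤ (x ^ k)⁻¹ * (4 * b / a) ^ Z₀ := by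
        apply mul_le_mul_of_nonneg_left ?_ hxkinv.le
        exact pow_le_pow_left₀ hG0 hGle Z₀
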